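/- arXiv:2109.01548 — 2 statements merged into one kernel-verified Lean document; each statement's English description precedes it below -/
import Mathlib

section
/- For any two probability density functions p₁ and p₂ (with respect to a common dominating measure), the expected absolute log-likelihood ratio satisfies E_{P₁}[|log(p₁/p₂)|] ≤ KL(P₁, P₂) + 2/e, where KL denotes the Kullback-Leibler divergence. -/
open MeasureTheory

lemma log_le_div_e {x : ℝ} (hx : 0 < x) : Real.log x ≤ x / Real.exp 1 := by
  have h1 : Real.log x = 1 + Real.log (x / Real.exp 1) := by
    rw [Real.log_div hx.ne' (Real.exp_pos 1).ne', Real.log_exp]; ring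
  have h2 : Real.log (x / Real.exp 1) ≤ x / Real.exp 1 - 1 :=
    Real.log_le_sub_one_of_pos (div_pos hx (Real.exp_pos 1))
  linarith

lemma key_ptwise {a b : ℝ} (ha : 0 ≤ a) (hb : 0 ≤ b) :
    a * max (-(Real.log (a / b))) 0 ≤ b / Real.exp 1 := by
  rcases eq_or_lt_of_le ha with h | ha
  · simp [← h]
    positivity
  rcases eq_or_lt_of_le hb with h | hb
  · simp [← h]
  rcases le_or_gt b a with hab | hab
  · have : 0 ≤ Real.log (a / b) := Real.log_nonneg ((one_le_div hb).mpr hab)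
    have : max (-(Real.log (a / b))) 0 = 0 := max_eq_right (by linarith)
    rw [this, mul_zero]
    positivity
  · have hlt : a / b < 1 := (div_lt_one hb).mpr hab
    have hlog : Real.log (a / b) < 0 := Real.log_neg (by positivity) hlt
    rw [max_eq_left (by linarith)]
    have : -(Real.log (a / b)) = Real.log (b / a) := by
      rw [← Real.log_inv, inv_div]
    rw [this]
    have h1 : Real.log (b / a) ≤ (b / a) / Real.exp 1 := log_le_div_e (by positivity)
    calc a * Real.log (b / a) ≤ a * ((b / a) / Real.exp 1) := by
          exact mul_le_mul_of_nonneg_left h1 ha.le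
      _ = b / Real.exp 1 := by field_simp
  
theorem abs_log_ratio_le_kl_add {α : Type*} [MeasurableSpace α] (μ : Measure α)
    (p₁ p₂ : α → ℝ)
    (hp₁ : ∀ x, 0 ≤ p₁ x) (hp₂ : ∀ x, 0 ≤ p₂ x)
    (hint₁ : Integrable p₁ μ) (hint₂ : Integrable p₂ μ)
    (hd₁ : ∫ x, p₁ x ∂μ = 1) (hd₂ : ∫ x, p₂ x ∂μ = 1)
    (habs : Integrable (fun x => p₁ x * |Real.log (p₁ x / p₂ x)|) μ)
    (hkl : Integrable (fun x => p₁ x * Real.log (p₁ x / p₂ x)) μ) :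
    ∫ x, p₁ x * |Real.log (p₁ x / p₂ x)| ∂μ ≤
      (∫ x, p₁ x * Real.log (p₁ x / p₂ x) ∂μ) + 2 / Real.exp 1 := by
  set g : α → ℝ := fun x => p₁ x * max (-(Real.log (p₁ x / p₂ x))) 0 with hg
  have hmax : ∀ y : ℝ, max (-y) 0 = (|y| - y) / 2 := by
    intro y
    rcases le_or_gt 0 y with h | h
    · rw [max_eq_right (by linarith), abs_of_nonneg h]; ring
    · rw [max_eq_left (by linarith), abs_of_neg h]; ring
  have hg_eq : g = fun x =>
      (p₁ x * |Real.log (p₁ x / p₂ x)| - p₁ x * Real.log (p₁ x / p₂ x)) / 2 := by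
    funext x; rw [hg]; simp only [hmax]; ring
  have hg_int : Integrable g μ := by
    rw [hg_eq]; exact (habs.sub hkl).div_const 2
  have hg_le : ∀ x, g x ≤ p₂ x / Real.exp 1 := fun x => key_ptwise (hp₁ x) (hp₂ x)
  have hgint_le : ∫ x, g x ∂μ ≤ 1 / Real.exp 1 := by
    have h1 : ∫ x, g x ∂μ ≤ ∫ x, p₂ x / Real.exp 1 ∂μ :=
      integral_mono hg_int (hint₂.div_const _) hg_le
    rwa [integral_div, hd₂] at h1
  have heq : ∫ x, p₁ x * |Real.log (p₁ x / p₂ x)| ∂μ =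
      (∫ x, p₁ x * Real.log (p₁ x / p₂ x) ∂μ) + 2 * ∫ x, g x ∂μ := by
    have : ∀ x, p₁ x * |Real.log (p₁ x / p₂ x)| =
        p₁ x * Real.log (p₁ x / p₂ x) + 2 * g x := by
      intro x; rw [hg]; simp only [hmax]; ring
    calc ∫ x, p₁ x * |Real.log (p₁ x / p₂ x)| ∂μ
        = ∫ x, (p₁ x * Real.log (p₁ x / p₂ x) + 2 * g x) ∂μ := by
          congr 1; funext x; exact this x
      _ = (∫ x, p₁ x * Real.log (p₁ x / p₂ x) ∂μ) + 2 * ∫ x, g x ∂μ := by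
          rw [integral_add hkl (hg_int.const_mul 2), integral_const_mul]
  rw [heq]
  have h3 : 2 / Real.exp 1 = 2 * (1 / Real.exp 1) := by ring
  rw [h3]
  linarith
end

section
/- Let hᵢ = tanh(βmᵢ + B) with |mᵢ| ≤ γ for all i, and let R be the 2×2 symmetric matrix with R₁₁ = Σᵢ mᵢ³(hᵢ-hᵢ³), R₁₂ = Σᵢ mᵢ²(hᵢ-hᵢ³), R₂₂ = Σᵢ mᵢ(hᵢ-hᵢ³). Then |det(R)| ≤ γ²·(2/(3√3))²·n²·T where T = (1/n)Σᵢ(mᵢ - m̄)² and m̄ = (1/n)Σᵢ mᵢ. -/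
open Finset

lemma abs_tanh_le_one (x : ℝ) : |Real.tanh x| ≤ 1 := by
  rw [Real.tanh_eq_sinh_div_cosh, abs_div, abs_of_pos (Real.cosh_pos x),
    div_le_one (Real.cosh_pos x), Real.abs_sinh]
  exact le_of_lt (by calc Real.sinh |x| < Real.cosh |x| := Real.sinh_lt_cosh _
    _ = Real.cosh x := Real.cosh_abs x)

lemma g_bound (x : ℝ) : |Real.tanh x - Real.tanh x ^ 3| ≤ 2 / (3 * Real.sqrt 3) := by
  set t := Real.tanh x with ht
  have h1 : |t| ≤ 1 := abs_tanh_le_one x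
  have hs : Real.sqrt 3 ^ 2 = 3 := Real.sq_sqrt (by norm_num)
  have hs1 : (1:ℝ) < Real.sqrt 3 := by nlinarith [Real.sqrt_nonneg 3]
  have hs2 : Real.sqrt 3 < 2 := by nlinarith
  have hpos : (0:ℝ) < 3 * Real.sqrt 3 := by linarith
  obtain ⟨hl, hr⟩ := abs_le.mp h1
  have hs3 : Real.sqrt 3 ^ 3 = 3 * Real.sqrt 3 := by rw [pow_succ, hs]
  rw [abs_le]
  constructor
  · have key : t ^ 3 - t ≤ 2 / (3 * Real.sqrt 3) := by
      rw [le_div_iff₀ hpos]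
      nlinarith [mul_nonneg (sq_nonneg (Real.sqrt 3 * t + 1))
        (by nlinarith : (0:ℝ) ≤ 2 - Real.sqrt 3 * t), hs3]
    linarith
  · rw [le_div_iff₀ hpos]
    nlinarith [mul_nonneg (sq_nonneg (Real.sqrt 3 * t - 1))
      (by nlinarith : (0:ℝ) ≤ Real.sqrt 3 * t + 2), hs3]

theorem remainder_det_bound (n : ℕ) (hn : 0 < n) (m h : Fin n → ℝ) (β B γ : ℝ)
    (hh : ∀ i, h i = Real.tanh (β * m i + B)) (hm : ∀ i, |m i| ≤ γ) :
    |(Matrix.of ![![∑ i, m i ^ 3 * (h i - h i ^ 3), ∑ i, m i ^ 2 * (h i - h i ^ 3)],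
                  ![∑ i, m i ^ 2 * (h i - h i ^ 3), ∑ i, m i * (h i - h i ^ 3)]]).det| ≤
      γ ^ 2 * (2 / (3 * Real.sqrt 3)) ^ 2 * (n : ℝ) ^ 2 *
        ((1 / n) * ∑ i, (m i - (1 / n) * ∑ k, m k) ^ 2) := by
  have hn' : (0:ℝ) < n := Nat.cast_pos.mpr hn
  set c : ℝ := 2 / (3 * Real.sqrt 3) with hc
  set g : Fin n → ℝ := fun i => h i - h i ^ 3 with hg
  have hcpos : 0 < c := by
    have : 0 < Real.sqrt 3 := Real.sqrt_pos.mpr (by norm_num)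
    positivity
  have hgb : ∀ i, |g i| ≤ c := fun i => by
    simp only [hg]; rw [hh i]; exact g_bound _
  have hγ : 0 ≤ γ := le_trans (abs_nonneg _) (hm ⟨0, hn⟩)
  rw [Matrix.det_fin_two_of]
  set S1 := ∑ i, m i ^ 3 * g i with hS1
  set S2 := ∑ i, m i ^ 2 * g i with hS2
  set S3 := ∑ i, m i * g i with hS3
  have key : 2 * (S1 * S3 - S2 * S2) =
      ∑ i, ∑ j, (m i * g i) * (m j * g j) * (m i - m j) ^ 2 := by
    have h13 : S1 * S3 = ∑ i, ∑ j, (m i ^ 3 * g i) * (m j * g j) := Finset.sum_mul_sum _ _ _ _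
    have h31 : S3 * S1 = ∑ i, ∑ j, (m i * g i) * (m j ^ 3 * g j) := Finset.sum_mul_sum _ _ _ _
    have h22 : S2 * S2 = ∑ i, ∑ j, (m i ^ 2 * g i) * (m j ^ 2 * g j) := Finset.sum_mul_sum _ _ _ _
    calc 2 * (S1 * S3 - S2 * S2) = S1 * S3 + S3 * S1 - 2 * (S2 * S2) := by ring
      _ = ∑ i, ∑ j, ((m i ^ 3 * g i) * (m j * g j) + (m i * g i) * (m j ^ 3 * g j)
            - 2 * ((m i ^ 2 * g i) * (m j ^ 2 * g j))) := by
          simp only [h13, h31, h22, Finset.mul_sum, ← Finset.sum_add_distrib,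
            ← Finset.sum_sub_distrib]
      _ = _ := by
          refine Finset.sum_congr rfl fun i _ => Finset.sum_congr rfl fun j _ => ?_
          ring
  have hbound : |∑ i, ∑ j, (m i * g i) * (m j * g j) * (m i - m j) ^ 2| ≤
      ∑ i, ∑ j, (γ * c) ^ 2 * (m i - m j) ^ 2 := by
    refine (Finset.abs_sum_le_sum_abs _ _).trans (Finset.sum_le_sum fun i _ =>
      (Finset.abs_sum_le_sum_abs _ _).trans (Finset.sum_le_sum fun j _ => ?_))
    have t1 : |m i * g i| ≤ γ * c := by
      rw [abs_mul]; exact mul_le_mul (hm i) (hgb i) (abs_nonneg _) hγ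
    have t2 : |m j * g j| ≤ γ * c := by
      rw [abs_mul]; exact mul_le_mul (hm j) (hgb j) (abs_nonneg _) hγ
    calc |(m i * g i) * (m j * g j) * (m i - m j) ^ 2|
        = |m i * g i| * |m j * g j| * (m i - m j) ^ 2 := by
          rw [abs_mul, abs_mul, abs_pow, sq_abs]
      _ ≤ (γ * c) * (γ * c) * (m i - m j) ^ 2 := by
          have := sq_nonneg (m i - m j)
          gcongr
      _ = (γ * c) ^ 2 * (m i - m j) ^ 2 := by ring
  have hinner : ∀ i, ∑ j, (m i - m j) ^ 2 =
      (n : ℝ) * m i ^ 2 - 2 * m i * (∑ k, m k) + ∑ k, m k ^ 2 := by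
    intro i
    have e : ∀ j : Fin n, (m i - m j) ^ 2 = m i ^ 2 - 2 * m i * m j + m j ^ 2 :=
      fun j => by ring
    rw [Finset.sum_congr rfl fun j _ => e j]
    simp only [Finset.sum_add_distrib, Finset.sum_sub_distrib, Finset.sum_const,
      ← Finset.mul_sum, Finset.card_univ, Fintype.card_fin, nsmul_eq_mul]
  have hsum : ∑ i, ∑ j, (m i - m j) ^ 2 =
      2 * (n : ℝ) * (∑ k, m k ^ 2) - 2 * (∑ k, m k) ^ 2 := by
    rw [Finset.sum_congr rfl fun i _ => hinner i]
    simp only [Finset.sum_add_distrib, Finset.sum_sub_distrib, Finset.sum_const,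
      ← Finset.mul_sum, ← Finset.sum_mul, Finset.card_univ, Fintype.card_fin, nsmul_eq_mul]
    ring
  have hvar : γ ^ 2 * c ^ 2 * (n : ℝ) ^ 2 * ((1 / n) * ∑ i, (m i - (1 / n) * ∑ k, m k) ^ 2)
      = (γ * c) ^ 2 * ((n : ℝ) * (∑ k, m k ^ 2) - (∑ k, m k) ^ 2) := by
    have expand : ∑ i, (m i - (1 / n) * ∑ k, m k) ^ 2
        = (∑ k, m k ^ 2) - 2 * ((1/n) * ∑ k, m k) * (∑ k, m k)
          + (n : ℝ) * ((1/n) * ∑ k, m k) ^ 2 := by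
      have e : ∀ i : Fin n, (m i - (1 / n) * ∑ k, m k) ^ 2
          = m i ^ 2 - 2 * ((1/n) * ∑ k, m k) * m i + ((1/n) * ∑ k, m k) ^ 2 :=
        fun i => by ring
      rw [Finset.sum_congr rfl fun i _ => e i]
      simp only [Finset.sum_add_distrib, Finset.sum_sub_distrib, Finset.sum_const,
        ← Finset.mul_sum, Finset.card_univ, Fintype.card_fin, nsmul_eq_mul]
    rw [expand]
    field_simp
    ring
  calc |S1 * S3 - S2 * S2| = (1/2) * |2 * (S1 * S3 - S2 * S2)| := by
        rw [abs_mul, abs_two]; ring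
    _ ≤ (1/2) * ∑ i, ∑ j, (γ * c) ^ 2 * (m i - m j) ^ 2 := by
        rw [key]; linarith [hbound]
    _ = (1/2) * ((γ * c) ^ 2 * ∑ i, ∑ j, (m i - m j) ^ 2) := by
        simp only [← Finset.mul_sum]
    _ = γ ^ 2 * c ^ 2 * (n : ℝ) ^ 2 * ((1 / n) * ∑ i, (m i - (1 / n) * ∑ k, m k) ^ 2) := by
        rw [hsum, hvar]; ring
end
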